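/- For a language R recognized by a DFA with finite state set Q, there exists ω ≥ 1 such that for every word w, the word w^ω is syntactically equivalent to w^(2ω) with respect to R. -/

import Mathlib

/-- Syntactic equivalence of two words with respect to a language `R`. -/
def SynEq {α : Type*} (R : Set (List α)) (w w' : List α) : Prop :=
  ∀ v x : List α, v ++ w ++ x ∈ R ↔ v ++ w' ++ x ∈ R

/-- `wpow w n` is the `n`-fold concatenation of the word `w` with itself. -/
def wpow {α : Type*} (w : List α) : ℕ → List α
  | 0 => []
  | n + 1 => w ++ wpow w n

private lemma pow_add_period {M : Type*} [Monoid M] {x : M} {i p : ℕ}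
    (h : x ^ (i + p) = x ^ i) : ∀ m, i ≤ m → x ^ (m + p) = x ^ m := by
  intro m hm
  induction m, hm using Nat.le_induction with
  | base => exact h
  | succ n hn ih =>
    have e1 : n + 1 + p = (n + p) + 1 := by omega
    rw [e1, pow_succ', ih, pow_succ']

private lemma pow_add_mul_period {M : Type*} [Monoid M] {x : M} {i p : ℕ}
    (h : x ^ (i + p) = x ^ i) : ∀ k m, i ≤ m → x ^ (m + k * p) = x ^ m := by
  intro k
  induction k with
  | zero => simp
  | succ n ih =>
    intro m hm
    have : m + (n + 1) * p = (m + n * p) + p := by ring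
    rw [this, pow_add_period h _ (le_trans hm (Nat.le_add_right _ _)), ih m hm]

/-- In a finite monoid there is a uniform `ω ≥ 1` with `x ^ (2ω) = x ^ ω` for all `x`. -/
private lemma finite_monoid_idempotent_pow (M : Type*) [Monoid M] [Finite M] :
    ∃ ω : ℕ, 1 ≤ ω ∧ ∀ x : M, x ^ (2 * ω) = x ^ ω := by
  cases nonempty_fintype M
  set c := Fintype.card M with hc
  refine ⟨(c + 1).factorial, (c + 1).factorial_pos, fun x => ?_⟩
  obtain ⟨a, b, hab, heq⟩ :=
    Fintype.exists_ne_map_eq_of_card_lt (fun n : Fin (c + 1) => x ^ ((n : ℕ) + 1))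
      (by simp; omega)
  wlog hlt : (a : ℕ) < (b : ℕ) generalizing a b
  · exact this b a hab.symm heq.symm
      (lt_of_le_of_ne (Nat.le_of_not_lt hlt) (by simpa [Fin.val_eq_val] using hab.symm))
  set i := (a : ℕ) + 1
  set p := (b : ℕ) - (a : ℕ)
  have hp1 : 1 ≤ p := by omega
  have hkey : x ^ (i + p) = x ^ i := by
    have : i + p = (b : ℕ) + 1 := by omega
    rw [this]; exact heq.symm
  have hpdvd : p ∣ (c + 1).factorial := by
    apply Nat.dvd_factorial hp1
    omega
  obtain ⟨k, hk⟩ := hpdvd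
  have hi : i ≤ (c + 1).factorial := by
    have := Nat.self_le_factorial (c + 1)
    omega
  have : 2 * (c + 1).factorial = (c + 1).factorial + k * p := by rw [two_mul]; rw [hk]; ring
  rw [this, pow_add_mul_period hkey k _ hi]

private lemma evalFrom_wpow {α σ : Type*} (M : DFA α σ) (w : List α)
    (f : Function.End σ) (hf : ∀ s, f s = M.evalFrom s w) :
    ∀ (n : ℕ) (s : σ), M.evalFrom s (wpow w n) = (f ^ n) s := by
  intro n
  induction n with
  | zero => intro s; simp [wpow]; rfl
  | succ n ih =>
    intro s
    rw [wpow, DFA.evalFrom_of_append, ← hf, ih, pow_succ]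
    rfl

/-- For a language recognized by a DFA with finitely many states, there is `ω ≥ 1`
such that `w^ω` is syntactically equivalent to `w^(2ω)` for every word `w`. -/
theorem dfa_power_synEq {α σ : Type*} [Fintype σ] (M : DFA α σ) :
    ∃ ω : ℕ, 1 ≤ ω ∧ ∀ w : List α,
      SynEq (M.accepts : Set (List α)) (wpow w ω) (wpow w (2 * ω)) := by
  have : Finite (Function.End σ) := inferInstanceAs (Finite (σ → σ))
  obtain ⟨ω, hω1, hω⟩ := finite_monoid_idempotent_pow (Function.End σ)
  refine ⟨ω, hω1, fun w v x => ?_⟩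
  set f : Function.End σ := fun s => M.evalFrom s w with hfdef
  have h1 : ∀ n, v ++ wpow w n ++ x ∈ M.accepts ↔
      M.evalFrom (M.evalFrom (M.evalFrom M.start v) (wpow w n)) x ∈ M.accept := by
    intro n
    rw [DFA.mem_accepts]
    show M.evalFrom M.start (v ++ wpow w n ++ x) ∈ M.accept ↔ _
    rw [DFA.evalFrom_of_append, DFA.evalFrom_of_append]
  refine Iff.trans (h1 ω) (Iff.trans ?_ (h1 (2 * ω)).symm)
  rw [evalFrom_wpow M w f (fun s => rfl), evalFrom_wpow M w f (fun s => rfl), hω]
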